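/- Let k ≥ 1 be an integer. For every p ∈ [−∞, 2] the p-mean ⟨·⟩_p : ℝ^k → [0,∞) is Schur²-concave, and for every p ∈ [2, ∞] the p-mean ⟨·⟩_p is Schur²-convex. -/

import Mathlib

open MeasureTheory ProbabilityTheory Filter
open scoped ENNReal

noncomputable section

/-- The standard Gaussian measure on `ℝ^k` (the `k`-fold product of `N(0,1)`). -/
def stdGaussianPi (k : ℕ) : MeasureTheory.Measure (Fin k → ℝ) :=
  MeasureTheory.Measure.pi fun _ => ProbabilityTheory.gaussianReal 0 1

/-- `a` majorizes `b`: the total sums agree and, for every `j`, the sum of the `j`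
largest entries of `a` is at least the sum of the `j` largest entries of `b`
(formulated equivalently: every sum of entries of `b` over an index set is dominated by
a sum of entries of `a` over an index set of the same cardinality). -/
def Majorizes {k : ℕ} (a b : Fin k → ℝ) : Prop :=
  (∑ i, a i = ∑ i, b i) ∧
  ∀ s : Finset (Fin k), ∃ t : Finset (Fin k),
    t.card = s.card ∧ ∑ i ∈ s, b i ≤ ∑ i ∈ t, a i

/-- The coordinatewise square `x² = (x₁², …, x_k²)` of a vector. -/
def sqv {k : ℕ} (x : Fin k → ℝ) : Fin k → ℝ := fun i => (x i) ^ 2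

/-- `f` is Schur²-concave: `f x ≤ f y` whenever `x²` majorizes `y²`. -/
def Schur2Concave {k : ℕ} {α : Type*} [Preorder α] (f : (Fin k → ℝ) → α) : Prop :=
  ∀ x y : Fin k → ℝ, Majorizes (sqv x) (sqv y) → f x ≤ f y

/-- `f` is Schur²-convex: `f x ≥ f y` whenever `x²` majorizes `y²`. -/
def Schur2Convex {k : ℕ} {α : Type*} [Preorder α] (f : (Fin k → ℝ) → α) : Prop :=
  ∀ x y : Fin k → ℝ, Majorizes (sqv x) (sqv y) → f y ≤ f x

/-- A set `A` is Schur²-convex if `x ∈ A` and `y² ⪯ x²` imply `y ∈ A`. -/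
def Schur2ConvexSet {k : ℕ} (A : Set (Fin k → ℝ)) : Prop :=
  ∀ x y : Fin k → ℝ, x ∈ A → Majorizes (sqv x) (sqv y) → y ∈ A

/-- A set `A` is Schur²-concave if `x ∈ A` and `y² ⪰ x²` imply `y ∈ A`. -/
def Schur2ConcaveSet {k : ℕ} (A : Set (Fin k → ℝ)) : Prop :=
  ∀ x y : Fin k → ℝ, x ∈ A → Majorizes (sqv y) (sqv x) → y ∈ A

open Classical in
/-- The `p`-mean `⟨x⟩_p` for `p ∈ [-∞, ∞]` (coded as `p : EReal`):
`⟨x⟩_p = ((1/k) ∑ |x_j|^p)^(1/p)` for real `p ≠ 0`, with `⟨x⟩_p := 0` when `p < 0` and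
some `x_j = 0`; `⟨x⟩_0 = ∏ |x_j|^(1/k)`; `⟨x⟩_∞ = max |x_j|`; `⟨x⟩_{-∞} = min |x_j|`. -/
noncomputable def pMean {k : ℕ} (p : EReal) (x : Fin k → ℝ) : ℝ :=
  if p = ⊤ then ⨆ j, |x j|
  else if p = ⊥ then ⨅ j, |x j|
  else if p = 0 then ∏ j, |x j| ^ ((k : ℝ)⁻¹)
  else if p.toReal < 0 ∧ ∃ j, x j = 0 then 0
  else ((k : ℝ)⁻¹ * ∑ j, |x j| ^ p.toReal) ^ (p.toReal)⁻¹

namespace PMAux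

open Finset

/-- Extension of a tuple to `ℕ` by zero. -/
def ext {M : Type*} [Zero M] {k : ℕ} (f : Fin k → M) : ℕ → M :=
  fun m => if h : m < k then f ⟨m, h⟩ else 0

lemma ext_lt {M : Type*} [Zero M] {k : ℕ} (f : Fin k → M) {m : ℕ} (h : m < k) :
    ext f m = f ⟨m, h⟩ := dif_pos h

lemma ext_fin {M : Type*} [Zero M] {k : ℕ} (f : Fin k → M) (i : Fin k) :
    ext f (i : ℕ) = f i := dif_pos i.isLt

lemma le_orderEmb : ∀ {j k : ℕ} (e : Fin j ↪o Fin k) (m : Fin j), (m : ℕ) ≤ (e m : ℕ)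
  | 0, _, _, m => m.elim0
  | (j + 1), k, e, m => by
    induction m using Fin.induction with
    | zero => exact Nat.zero_le _
    | succ i ih =>
      have h1 : (e i.castSucc : ℕ) < (e i.succ : ℕ) := e.strictMono Fin.castSucc_lt_succ
      simp only [Fin.coe_castSucc] at ih
      simp only [Fin.val_succ]
      omega

lemma orderEmb_val_le {j k : ℕ} (hj : j ≤ k) (e : Fin j ↪o Fin k) (m : Fin j) :
    (e m : ℕ) ≤ k - j + m := by
  have he : StrictMono (fun m : Fin j => ((e m.rev).rev : Fin k)) := by
    intro u v huv
    exact Fin.rev_lt_rev.2 (e.strictMono (Fin.rev_lt_rev.2 huv))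
  let e' : Fin j ↪o Fin k := OrderEmbedding.ofStrictMono (fun m => (e m.rev).rev) he
  have h1 : ((m.rev : Fin j) : ℕ) ≤ ((e' m.rev : Fin k) : ℕ) := le_orderEmb e' m.rev
  have h2 : e' m.rev = (e m).rev := by
    show (e m.rev.rev).rev = (e m).rev
    rw [Fin.rev_rev]
  rw [h2] at h1
  have hm := m.isLt
  have hem := (e m).isLt
  have hrev1 : ((m.rev : Fin j) : ℕ) = j - 1 - (m : ℕ) := by
    rw [Fin.val_rev]; omega
  have hrev2 : (((e m).rev : Fin k) : ℕ) = k - 1 - ((e m) : ℕ) := by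
    rw [Fin.val_rev]; omega
  omega

lemma sum_eq_sum_orderEmbOfFin {M : Type*} [AddCommMonoid M] {k j : ℕ} (f : Fin k → M)
    (t : Finset (Fin k)) (ht : t.card = j) :
    ∑ i ∈ t, f i = ∑ m : Fin j, f (t.orderEmbOfFin ht m) := by
  have ht' : t = Finset.univ.map (t.orderEmbOfFin ht).toEmbedding := by
    ext i
    simp only [Finset.mem_map, Finset.mem_univ, true_and]
    have hrange := Finset.range_orderEmbOfFin t ht
    constructor
    · intro hi
      have : i ∈ Set.range (t.orderEmbOfFin ht) := by rw [hrange]; exact hi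
      obtain ⟨m, hm⟩ := this
      exact ⟨m, hm⟩
    · rintro ⟨m, rfl⟩
      have : (t.orderEmbOfFin ht) m ∈ Set.range (t.orderEmbOfFin ht) := ⟨m, rfl⟩
      rw [hrange] at this
      exact this
  conv_lhs => rw [ht']
  rw [Finset.sum_map]
  rfl

lemma suffix_max {k j : ℕ} (hj : j ≤ k) {f : Fin k → ℝ} (hf : Monotone f)
    {t : Finset (Fin k)} (ht : t.card = j) :
    ∑ i ∈ t, f i ≤ ∑ m ∈ Finset.range j, ext f (k - j + m) := by
  rw [sum_eq_sum_orderEmbOfFin f t ht,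
    ← Fin.sum_univ_eq_sum_range (fun m => ext f (k - j + m)) j]
  apply Finset.sum_le_sum
  intro m _
  have hm := m.isLt
  have hlt : k - j + (m : ℕ) < k := by omega
  rw [ext_lt f hlt]
  apply hf
  rw [Fin.le_def]
  exact orderEmb_val_le hj _ m

lemma sum_filter_ge {M : Type*} [AddCommMonoid M] {k : ℕ} (f : Fin k → M) (j : ℕ) :
    ∑ i ∈ Finset.univ.filter (fun i : Fin k => j ≤ (i : ℕ)), f i
      = ∑ m ∈ Finset.range (k - j), ext f (j + m) := by
  rw [← Finset.sum_Ico_eq_sum_range (f := ext f) (m := j) (n := k)]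
  have h1 : Finset.Ico j k = (Finset.range k).filter (fun m => j ≤ m) := by
    ext m
    simp only [Finset.mem_Ico, Finset.mem_filter, Finset.mem_range]
    tauto
  rw [h1, Finset.sum_filter, Finset.sum_filter,
    ← Fin.sum_univ_eq_sum_range (fun m => if j ≤ m then ext f m else 0) k]
  apply Finset.sum_congr rfl
  intro i _
  rw [ext_fin]

lemma card_filter_ge {k : ℕ} (j : ℕ) (hj : j ≤ k) :
    (Finset.univ.filter (fun i : Fin k => j ≤ (i : ℕ))).card = k - j := by
  rw [Finset.card_eq_sum_ones, sum_filter_ge (fun _ : Fin k => (1 : ℕ)) j]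
  have h1 : ∀ m ∈ Finset.range (k - j), ext (fun _ : Fin k => (1 : ℕ)) (j + m) = 1 := by
    intro m hm
    rw [Finset.mem_range] at hm
    exact ext_lt _ (by omega)
  rw [Finset.sum_congr rfl h1, Finset.sum_const, smul_eq_mul, mul_one, Finset.card_range]

lemma maj_add {k : ℕ} {a b : Fin k → ℝ} (h : Majorizes a b) (ε : ℝ) :
    Majorizes (fun i => a i + ε) (fun i => b i + ε) := by
  obtain ⟨h1, h2⟩ := h
  constructor
  · simp only [Finset.sum_add_distrib, h1]
  · intro s
    obtain ⟨t, htc, hts⟩ := h2 s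
    refine ⟨t, htc, ?_⟩
    simp only [Finset.sum_add_distrib, Finset.sum_const, htc, nsmul_eq_mul]
    linarith

/-- Hardy–Littlewood–Pólya inequality with an explicit subgradient. -/
lemma hlp {k : ℕ} {a b : Fin k → ℝ} (h : Majorizes a b) {S : Set ℝ}
    (ha : ∀ i, a i ∈ S) (hb : ∀ i, b i ∈ S) {g c : ℝ → ℝ}
    (hsub : ∀ s ∈ S, ∀ t ∈ S, g t ≤ g s + c s * (t - s))
    (hc : AntitoneOn c S) :
    ∑ i, g (a i) ≤ ∑ i, g (b i) := by
  classical
  set σ := Tuple.sort a with hσ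
  set τ := Tuple.sort b with hτ
  set a' : Fin k → ℝ := a ∘ σ with ha'
  set b' : Fin k → ℝ := b ∘ τ with hb'
  have hma : Monotone a' := Tuple.monotone_sort a
  have hmb : Monotone b' := Tuple.monotone_sort b
  have hsa : ∑ i, a' i = ∑ i, a i := Equiv.sum_comp σ a
  have hsb : ∑ i, b' i = ∑ i, b i := Equiv.sum_comp τ b
  have hsum_ext : ∀ f : Fin k → ℝ, ∑ m ∈ Finset.range k, ext f m = ∑ i, f i := by
    intro f
    rw [← Fin.sum_univ_eq_sum_range (ext f) k]
    apply Finset.sum_congr rfl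
    intro i _
    rw [ext_fin]
  set A : ℕ → ℝ := fun j => ∑ m ∈ Finset.range j, ext a' m with hA
  set B : ℕ → ℝ := fun j => ∑ m ∈ Finset.range j, ext b' m with hB
  have hAk : A k = ∑ i, a i := by
    show ∑ m ∈ Finset.range k, ext a' m = ∑ i, a i
    rw [hsum_ext a', hsa]
  have hBk : B k = ∑ i, b i := by
    show ∑ m ∈ Finset.range k, ext b' m = ∑ i, b i
    rw [hsum_ext b', hsb]
  have hABk : A k = B k := by rw [hAk, hBk, h.1]
  have hAB : ∀ j, j ≤ k → A j ≤ B j := by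
    intro j hj
    have hsplitA : A k = A j + ∑ m ∈ Finset.range (k - j), ext a' (j + m) := by
      show ∑ m ∈ Finset.range k, ext a' m
        = (∑ m ∈ Finset.range j, ext a' m) + ∑ m ∈ Finset.range (k - j), ext a' (j + m)
      rw [← Finset.sum_Ico_eq_sum_range (f := ext a') (m := j) (n := k)]
      exact (Finset.sum_range_add_sum_Ico _ hj).symm
    have hsplitB : B k = B j + ∑ m ∈ Finset.range (k - j), ext b' (j + m) := by
      show ∑ m ∈ Finset.range k, ext b' m
        = (∑ m ∈ Finset.range j, ext b' m) + ∑ m ∈ Finset.range (k - j), ext b' (j + m)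
      rw [← Finset.sum_Ico_eq_sum_range (f := ext b') (m := j) (n := k)]
      exact (Finset.sum_range_add_sum_Ico _ hj).symm
    have key : ∑ m ∈ Finset.range (k - j), ext b' (j + m)
        ≤ ∑ m ∈ Finset.range (k - j), ext a' (j + m) := by
      set top : Finset (Fin k) := Finset.univ.filter (fun i : Fin k => j ≤ (i : ℕ)) with htop
      have htc : top.card = k - j := card_filter_ge j hj
      have hLHS : ∑ m ∈ Finset.range (k - j), ext b' (j + m) = ∑ i ∈ top, b' i :=
        (sum_filter_ge b' j).symm
      set sB : Finset (Fin k) := top.map τ.toEmbedding with hsB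
      have hsBc : sB.card = k - j := by rw [hsB, Finset.card_map, htc]
      have hsum_sB : ∑ i ∈ sB, b i = ∑ i ∈ top, b' i := by
        rw [hsB, Finset.sum_map]
        rfl
      obtain ⟨t, htc2, hts⟩ := h.2 sB
      set t' : Finset (Fin k) := t.map σ.symm.toEmbedding with ht'
      have ht'c : t'.card = k - j := by rw [ht', Finset.card_map, htc2, hsBc]
      have hsum_t' : ∑ i ∈ t', a' i = ∑ i ∈ t, a i := by
        rw [ht', Finset.sum_map]
        apply Finset.sum_congr rfl
        intro i _
        show a (σ (σ.symm i)) = a i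
        rw [Equiv.apply_symm_apply]
      have hsuf := suffix_max (Nat.sub_le k j) hma ht'c
      have hjj : k - (k - j) = j := by omega
      rw [hjj] at hsuf
      calc ∑ m ∈ Finset.range (k - j), ext b' (j + m) = ∑ i ∈ top, b' i := hLHS
        _ = ∑ i ∈ sB, b i := hsum_sB.symm
        _ ≤ ∑ i ∈ t, a i := hts
        _ = ∑ i ∈ t', a' i := hsum_t'.symm
        _ ≤ ∑ m ∈ Finset.range (k - j), ext a' (j + m) := hsuf
    linarith
  have hga : ∑ i, g (a' i) = ∑ i, g (a i) := Equiv.sum_comp σ (fun i => g (a i))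
  have hgb : ∑ i, g (b' i) = ∑ i, g (b i) := Equiv.sum_comp τ (fun i => g (b i))
  set C : ℕ → ℝ := fun m => if h : m < k then c (b' ⟨m, h⟩) else 0 with hC
  set d : ℕ → ℝ := fun m => ext a' m - ext b' m with hd
  have step1 : ∑ i, g (a' i) - ∑ i, g (b' i) ≤ ∑ m ∈ Finset.range k, C m * d m := by
    rw [← Finset.sum_sub_distrib, ← Fin.sum_univ_eq_sum_range (fun m => C m * d m) k]
    apply Finset.sum_le_sum
    intro i _
    have h1 := hsub (b' i) (hb (τ i)) (a' i) (ha (σ i))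
    have hCi : C (i : ℕ) = c (b' i) := by
      show (if h : (i : ℕ) < k then c (b' ⟨(i : ℕ), h⟩) else 0) = c (b' i)
      rw [dif_pos i.isLt]
    have hdi : d (i : ℕ) = a' i - b' i := by
      show ext a' (i : ℕ) - ext b' (i : ℕ) = a' i - b' i
      rw [ext_fin, ext_fin]
    rw [hCi, hdi]
    linarith
  have hDk : ∑ m ∈ Finset.range k, d m = 0 := by
    show ∑ m ∈ Finset.range k, (ext a' m - ext b' m) = 0
    rw [Finset.sum_sub_distrib, hsum_ext a', hsum_ext b', hsa, hsb, h.1, sub_self]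
  have hDj : ∀ j, j ≤ k → ∑ m ∈ Finset.range j, d m ≤ 0 := by
    intro j hj
    have h1 : ∑ m ∈ Finset.range j, d m = A j - B j := by
      show ∑ m ∈ Finset.range j, (ext a' m - ext b' m)
        = (∑ m ∈ Finset.range j, ext a' m) - ∑ m ∈ Finset.range j, ext b' m
      rw [Finset.sum_sub_distrib]
    rw [h1]
    linarith [hAB j hj]
  have hterm : ∀ i ∈ Finset.range (k - 1),
      0 ≤ (C (i + 1) - C i) * (∑ m ∈ Finset.range (i + 1), d m) := by
    intro i hi
    rw [Finset.mem_range] at hi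
    have hik : i + 1 < k := by omega
    have hik' : i < k := by omega
    have hCd : C (i + 1) - C i ≤ 0 := by
      have hle : b' ⟨i, hik'⟩ ≤ b' ⟨i + 1, hik⟩ := hmb (by simp [Fin.le_def])
      have h2 : c (b' ⟨i + 1, hik⟩) ≤ c (b' ⟨i, hik'⟩) :=
        hc (hb (τ ⟨i, hik'⟩)) (hb (τ ⟨i + 1, hik⟩)) hle
      show (if h : i + 1 < k then c (b' ⟨i + 1, h⟩) else 0)
        - (if h : i < k then c (b' ⟨i, h⟩) else 0) ≤ 0
      rw [dif_pos hik, dif_pos hik']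
      linarith
    have hD := hDj (i + 1) (by omega)
    nlinarith
  have hsum0 : ∑ m ∈ Finset.range k, C m * d m ≤ 0 := by
    have habel := Finset.sum_range_by_parts C d k
    simp only [smul_eq_mul] at habel
    rw [habel, hDk, mul_zero, zero_sub]
    have h2 : 0 ≤ ∑ i ∈ Finset.range (k - 1),
        (C (i + 1) - C i) * ∑ m ∈ Finset.range (i + 1), d m :=
      Finset.sum_nonneg hterm
    linarith
  linarith

/-- Convex version of the HLP inequality. -/
lemma hlp_convex {k : ℕ} {a b : Fin k → ℝ} (h : Majorizes a b) {S : Set ℝ}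
    (ha : ∀ i, a i ∈ S) (hb : ∀ i, b i ∈ S) {g c : ℝ → ℝ}
    (hsub : ∀ s ∈ S, ∀ t ∈ S, g s + c s * (t - s) ≤ g t)
    (hc : MonotoneOn c S) :
    ∑ i, g (b i) ≤ ∑ i, g (a i) := by
  have h1 := hlp h ha hb (g := fun t => -g t) (c := fun t => -c t)
    (by
      intro s hsS t htS
      have h2 := hsub s hsS t htS
      simp only [neg_mul]
      linarith)
    (by
      intro u hu v hv huv
      have h2 := hc hu hv huv
      simp only
      linarith)
  simp only [Finset.sum_neg_distrib] at h1
  linarith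

lemma bernoulli_nonpos {x p : ℝ} (hx : 0 < x) (hp : p ≤ 0) :
    1 + p * (x - 1) ≤ x ^ p := by
  rcases le_or_gt p (-1) with h | h
  · have hxi : 0 < x⁻¹ := inv_pos.2 hx
    have hs : (-1 : ℝ) ≤ x⁻¹ - 1 := by linarith
    have hb := one_add_mul_self_le_rpow_one_add hs (p := -p) (by linarith)
    rw [show (1 : ℝ) + (x⁻¹ - 1) = x⁻¹ by ring] at hb
    have hx' : (x⁻¹ : ℝ) ^ (-p) = x ^ p := by
      rw [Real.inv_rpow hx.le, Real.rpow_neg hx.le, inv_inv]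
    rw [hx'] at hb
    have key : 0 ≤ x - 1 + (x⁻¹ - 1) := by
      have h1 : x * x⁻¹ = 1 := mul_inv_cancel₀ (ne_of_gt hx)
      nlinarith [sq_nonneg (x - 1)]
    have h2 : 0 ≤ (-p) * (x - 1 + (x⁻¹ - 1)) := mul_nonneg (by linarith) key
    nlinarith [hb]
  · have hs : (-1 : ℝ) ≤ x - 1 := by linarith
    have hb := rpow_one_add_le_one_add_mul_self hs (p := -p) (by linarith) (by linarith)
    rw [show (1 : ℝ) + (x - 1) = x by ring] at hb
    have hxpos : 0 < x ^ (-p) := Real.rpow_pos_of_pos hx _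
    have hpos : (0 : ℝ) < 1 + (-p) * (x - 1) := lt_of_lt_of_le hxpos hb
    have hxp : x ^ p = (x ^ (-p))⁻¹ := by
      rw [← Real.rpow_neg hx.le, neg_neg]
    have h1 : (1 + (-p) * (x - 1))⁻¹ ≤ x ^ p := by
      rw [hxp]
      have := one_div_le_one_div_of_le hxpos hb
      simpa [one_div] using this
    have hmul : (1 + p * (x - 1)) * (1 + (-p) * (x - 1)) ≤ 1 := by
      nlinarith [sq_nonneg (p * (x - 1))]
    have h2 : 1 + p * (x - 1) ≤ (1 + (-p) * (x - 1))⁻¹ := by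
      have := (le_div_iff₀ hpos).mpr hmul
      simpa [one_div] using this
    linarith

lemma tangent_concave {r s t : ℝ} (hr0 : 0 < r) (hr1 : r ≤ 1) (hs : 0 < s) (ht : 0 < t) :
    t ^ r ≤ s ^ r + r * s ^ (r - 1) * (t - s) := by
  have hts : 0 < t / s := div_pos ht hs
  have hb := rpow_one_add_le_one_add_mul_self (s := t / s - 1) (by linarith) hr0.le hr1
  rw [show (1 : ℝ) + (t / s - 1) = t / s by ring] at hb
  have hdiv : (t / s) ^ r = t ^ r / s ^ r := Real.div_rpow ht.le hs.le r
  have hsr : 0 < s ^ r := Real.rpow_pos_of_pos hs r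
  have hsr1 : s ^ (r - 1) = s ^ r / s := by
    rw [Real.rpow_sub hs, Real.rpow_one]
  rw [hdiv] at hb
  have h2 := mul_le_mul_of_nonneg_left hb hsr.le
  calc t ^ r = s ^ r * (t ^ r / s ^ r) := by field_simp
    _ ≤ s ^ r * (1 + r * (t / s - 1)) := h2
    _ = s ^ r + r * s ^ (r - 1) * (t - s) := by
        rw [hsr1]; field_simp

lemma tangent_convex {r s t : ℝ} (hr : 1 ≤ r ∨ r ≤ 0) (hs : 0 < s) (ht : 0 < t) :
    s ^ r + r * s ^ (r - 1) * (t - s) ≤ t ^ r := by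
  have hts : 0 < t / s := div_pos ht hs
  have hb : 1 + r * (t / s - 1) ≤ (t / s) ^ r := by
    rcases hr with h1 | h2
    · have := one_add_mul_self_le_rpow_one_add (s := t / s - 1) (by linarith) h1
      rwa [show (1 : ℝ) + (t / s - 1) = t / s by ring] at this
    · exact bernoulli_nonpos hts h2
  have hdiv : (t / s) ^ r = t ^ r / s ^ r := Real.div_rpow ht.le hs.le r
  have hsr : 0 < s ^ r := Real.rpow_pos_of_pos hs r
  have hsr1 : s ^ (r - 1) = s ^ r / s := by
    rw [Real.rpow_sub hs, Real.rpow_one]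
  rw [hdiv] at hb
  have h2 := mul_le_mul_of_nonneg_left hb hsr.le
  calc s ^ r + r * s ^ (r - 1) * (t - s)
      = s ^ r * (1 + r * (t / s - 1)) := by rw [hsr1]; field_simp
    _ ≤ s ^ r * (t ^ r / s ^ r) := h2
    _ = t ^ r := by field_simp

lemma sum_sq_rpow_le {k : ℕ} {x y : Fin k → ℝ} (h : Majorizes (sqv x) (sqv y)) {r : ℝ}
    (hr0 : 0 < r) (hr1 : r ≤ 1) :
    ∑ i, (x i ^ 2) ^ r ≤ ∑ i, (y i ^ 2) ^ r := by
  have hstep : ∀ ε : ℝ, 0 < ε → ∑ i, (x i ^ 2 + ε) ^ r ≤ ∑ i, (y i ^ 2 + ε) ^ r := by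
    intro ε hε
    have hmaj : Majorizes (fun i => x i ^ 2 + ε) (fun i => y i ^ 2 + ε) := maj_add h ε
    exact hlp hmaj (S := Set.Ioi 0)
      (fun i => by show (0 : ℝ) < x i ^ 2 + ε; positivity)
      (fun i => by show (0 : ℝ) < y i ^ 2 + ε; positivity)
      (g := fun t => t ^ r) (c := fun s => r * s ^ (r - 1))
      (fun s hsS t htS => tangent_concave hr0 hr1 hsS htS)
      (fun u hu v hv huv =>
        mul_le_mul_of_nonneg_left (Real.rpow_le_rpow_of_nonpos hu huv (by linarith)) hr0.le)
  have hrc : Continuous fun z : ℝ => z ^ r :=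
    continuous_iff_continuousAt.2 fun z => Real.continuousAt_rpow_const z r (Or.inr hr0.le)
  have hcont : Continuous fun ε : ℝ =>
      ∑ i, (y i ^ 2 + ε) ^ r - ∑ i, (x i ^ 2 + ε) ^ r := by
    apply Continuous.sub <;> apply continuous_finset_sum <;> intro i _ <;>
      exact hrc.comp (continuous_const.add continuous_id)
  have hlim : Filter.Tendsto (fun ε : ℝ => ∑ i, (y i ^ 2 + ε) ^ r - ∑ i, (x i ^ 2 + ε) ^ r)
      (nhdsWithin 0 (Set.Ioi 0)) (nhds (∑ i, (y i ^ 2) ^ r - ∑ i, (x i ^ 2) ^ r)) := by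
    have h1 := hcont.tendsto 0
    simp only [add_zero] at h1
    exact h1.mono_left nhdsWithin_le_nhds
  have h0 : (0 : ℝ) ≤ ∑ i, (y i ^ 2) ^ r - ∑ i, (x i ^ 2) ^ r := by
    refine ge_of_tendsto hlim ?_
    filter_upwards [self_mem_nhdsWithin] with ε hε
    exact sub_nonneg.2 (hstep ε hε)
  linarith

lemma sum_sq_rpow_ge {k : ℕ} {x y : Fin k → ℝ} (h : Majorizes (sqv x) (sqv y)) {r : ℝ}
    (hr1 : 1 ≤ r) :
    ∑ i, (y i ^ 2) ^ r ≤ ∑ i, (x i ^ 2) ^ r := by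
  have hstep : ∀ ε : ℝ, 0 < ε → ∑ i, (y i ^ 2 + ε) ^ r ≤ ∑ i, (x i ^ 2 + ε) ^ r := by
    intro ε hε
    have hmaj : Majorizes (fun i => x i ^ 2 + ε) (fun i => y i ^ 2 + ε) := maj_add h ε
    exact hlp_convex hmaj (S := Set.Ioi 0)
      (fun i => by show (0 : ℝ) < x i ^ 2 + ε; positivity)
      (fun i => by show (0 : ℝ) < y i ^ 2 + ε; positivity)
      (g := fun t => t ^ r) (c := fun s => r * s ^ (r - 1))
      (fun s hsS t htS => tangent_convex (Or.inl hr1) hsS htS)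
      (fun u hu v hv huv =>
        mul_le_mul_of_nonneg_left
          (Real.rpow_le_rpow (le_of_lt hu) huv (by linarith)) (by linarith))
  have hrc : Continuous fun z : ℝ => z ^ r :=
    continuous_iff_continuousAt.2 fun z => Real.continuousAt_rpow_const z r (Or.inr (by linarith))
  have hcont : Continuous fun ε : ℝ =>
      ∑ i, (x i ^ 2 + ε) ^ r - ∑ i, (y i ^ 2 + ε) ^ r := by
    apply Continuous.sub <;> apply continuous_finset_sum <;> intro i _ <;>
      exact hrc.comp (continuous_const.add continuous_id)
  have hlim : Filter.Tendsto (fun ε : ℝ => ∑ i, (x i ^ 2 + ε) ^ r - ∑ i, (y i ^ 2 + ε) ^ r)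
      (nhdsWithin 0 (Set.Ioi 0)) (nhds (∑ i, (x i ^ 2) ^ r - ∑ i, (y i ^ 2) ^ r)) := by
    have h1 := hcont.tendsto 0
    simp only [add_zero] at h1
    exact h1.mono_left nhdsWithin_le_nhds
  have h0 : (0 : ℝ) ≤ ∑ i, (x i ^ 2) ^ r - ∑ i, (y i ^ 2) ^ r := by
    refine ge_of_tendsto hlim ?_
    filter_upwards [self_mem_nhdsWithin] with ε hε
    exact sub_nonneg.2 (hstep ε hε)
  linarith

lemma sum_sq_rpow_ge_neg {k : ℕ} {x y : Fin k → ℝ} (h : Majorizes (sqv x) (sqv y)) {r : ℝ}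
    (hr : r ≤ 0) (hx : ∀ i, x i ≠ 0) (hy : ∀ i, y i ≠ 0) :
    ∑ i, (y i ^ 2) ^ r ≤ ∑ i, (x i ^ 2) ^ r :=
  hlp_convex h (S := Set.Ioi 0)
    (fun i => by
      show (0 : ℝ) < x i ^ 2
      exact lt_of_le_of_ne (sq_nonneg _) (Ne.symm (pow_ne_zero _ (hx i))))
    (fun i => by
      show (0 : ℝ) < y i ^ 2
      exact lt_of_le_of_ne (sq_nonneg _) (Ne.symm (pow_ne_zero _ (hy i))))
    (g := fun t => t ^ r) (c := fun s => r * s ^ (r - 1))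
    (fun s hsS t htS => tangent_convex (Or.inr hr) hsS htS)
    (fun u hu v hv huv => by
      have h1 : v ^ (r - 1) ≤ u ^ (r - 1) :=
        Real.rpow_le_rpow_of_nonpos hu huv (by linarith)
      have := mul_le_mul_of_nonpos_left h1 hr
      simpa using this)

lemma sum_log_sq_le {k : ℕ} {x y : Fin k → ℝ} (h : Majorizes (sqv x) (sqv y))
    (hx : ∀ i, x i ≠ 0) (hy : ∀ i, y i ≠ 0) :
    ∑ i, Real.log (x i ^ 2) ≤ ∑ i, Real.log (y i ^ 2) :=
  hlp h (S := Set.Ioi 0)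
    (fun i => by
      show (0 : ℝ) < x i ^ 2
      exact lt_of_le_of_ne (sq_nonneg _) (Ne.symm (pow_ne_zero _ (hx i))))
    (fun i => by
      show (0 : ℝ) < y i ^ 2
      exact lt_of_le_of_ne (sq_nonneg _) (Ne.symm (pow_ne_zero _ (hy i))))
    (g := Real.log) (c := fun s => s⁻¹)
    (fun s hsS t htS => by
      have hs : (0 : ℝ) < s := hsS
      have ht : (0 : ℝ) < t := htS
      have h1 := Real.log_le_sub_one_of_pos (div_pos ht hs)
      rw [Real.log_div (ne_of_gt ht) (ne_of_gt hs)] at h1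
      have h2 : t / s - 1 = s⁻¹ * (t - s) := by field_simp
      linarith)
    (fun u hu v hv huv => by
      have := one_div_le_one_div_of_le hu huv
      simpa [one_div] using this)

lemma min_sq_le {k : ℕ} (hk : 1 ≤ k) {x y : Fin k → ℝ} (h : Majorizes (sqv x) (sqv y))
    (j₀ : Fin k) : ∃ i, x i ^ 2 ≤ y j₀ ^ 2 := by
  obtain ⟨t, htc, hts⟩ := h.2 (Finset.univ.erase j₀)
  have hcard : (Finset.univ.erase j₀).card = k - 1 := by
    rw [Finset.card_erase_of_mem (Finset.mem_univ _), Finset.card_univ, Fintype.card_fin]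
  have htcard : tᶜ.card = 1 := by
    rw [Finset.card_compl, htc, hcard, Fintype.card_fin]
    omega
  obtain ⟨i, hi⟩ := Finset.card_eq_one.1 htcard
  refine ⟨i, ?_⟩
  have h1 : ∑ i ∈ Finset.univ.erase j₀, sqv y i + sqv y j₀ = ∑ i, sqv y i :=
    Finset.sum_erase_add _ _ (Finset.mem_univ _)
  have h2 : ∑ i ∈ t, sqv x i + ∑ i ∈ tᶜ, sqv x i = ∑ i, sqv x i :=
    Finset.sum_add_sum_compl t _
  have h3 : ∑ i ∈ tᶜ, sqv x i = sqv x i := by rw [hi, Finset.sum_singleton]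
  have h4 := h.1
  have h5 : sqv x i ≤ sqv y j₀ := by linarith
  exact h5

lemma abs_le_abs_of_sq {u v : ℝ} (h : u ^ 2 ≤ v ^ 2) : |u| ≤ |v| := by
  have := Real.sqrt_le_sqrt h
  rwa [Real.sqrt_sq_eq_abs, Real.sqrt_sq_eq_abs] at this

lemma abs_rpow_eq {x q : ℝ} : |x| ^ q = (x ^ 2) ^ (q / 2) := by
  have h1 : (x ^ 2 : ℝ) = |x| ^ ((2 : ℕ) : ℝ) := by
    rw [Real.rpow_natCast, sq_abs]
  rw [h1, ← Real.rpow_mul (abs_nonneg x)]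
  congr 1
  push_cast
  ring

end PMAux
/-- The `p`-mean is Schur²-concave for `p ∈ [-∞,2]` and Schur²-convex for `p ∈ [2,∞]`. -/
theorem pMean_schur2 (k : ℕ) (hk : 1 ≤ k) :
    (∀ p : EReal, p ≤ 2 → Schur2Concave (fun x : Fin k → ℝ => pMean p x)) ∧
    (∀ p : EReal, 2 ≤ p → Schur2Convex (fun x : Fin k → ℝ => pMean p x)) := by
  haveI : Nonempty (Fin k) := Fin.pos_iff_nonempty.1 (by omega)
  have h2t : (2 : EReal) ≠ ⊤ := by
    rw [show (2 : EReal) = ((2 : ℝ) : EReal) by norm_cast]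
    exact EReal.coe_ne_top 2
  have h2b : (2 : EReal) ≠ ⊥ := by
    rw [show (2 : EReal) = ((2 : ℝ) : EReal) by norm_cast]
    exact EReal.coe_ne_bot 2
  have hknz : ((k : ℝ)) ≠ 0 := Nat.cast_ne_zero.2 (by omega)
  have hzero : ∀ x y : Fin k → ℝ, Majorizes (sqv x) (sqv y) →
      (∀ i, x i ≠ 0) → ∀ j, y j ≠ 0 := by
    intro x y hmaj hx0 j hj
    obtain ⟨i, hi⟩ := PMAux.min_sq_le hk hmaj j
    rw [hj] at hi
    have h0 : x i ^ 2 = 0 := le_antisymm (by simpa using hi) (sq_nonneg _)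
    exact hx0 i (sq_eq_zero_iff.1 h0)
  constructor
  · -- concave part
    intro p hp x y hmaj
    show pMean p x ≤ pMean p y
    by_cases hpt : p = ⊤
    · rw [hpt] at hp
      exact absurd hp (fun h => h2t (top_le_iff.1 h))
    by_cases hpb : p = ⊥
    · subst hpb
      unfold pMean
      rw [if_neg bot_ne_top, if_neg bot_ne_top, if_pos rfl, if_pos rfl]
      refine le_ciInf fun j => ?_
      obtain ⟨i, hi⟩ := PMAux.min_sq_le hk hmaj j
      exact le_trans (ciInf_le (Set.Finite.bddBelow (Set.finite_range _)) i)
        (PMAux.abs_le_abs_of_sq hi)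
    by_cases hp0 : p = 0
    · subst hp0
      unfold pMean
      rw [if_neg hpt, if_neg hpt, if_neg hpb, if_neg hpb, if_pos rfl, if_pos rfl]
      by_cases hx0 : ∃ i, x i = 0
      · obtain ⟨i, hi⟩ := hx0
        have hL : ∏ j, |x j| ^ ((k : ℝ)⁻¹) = 0 := by
          apply Finset.prod_eq_zero (Finset.mem_univ i)
          rw [hi, abs_zero]
          exact Real.zero_rpow (inv_ne_zero hknz)
        rw [hL]
        positivity
      · push_neg at hx0
        have hy0 : ∀ j, y j ≠ 0 := hzero x y hmaj hx0
        have key := PMAux.sum_log_sq_le hmaj hx0 hy0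
        have hexp : ∀ z : Fin k → ℝ, (∀ j, z j ≠ 0) →
            ∏ j, |z j| ^ ((k : ℝ)⁻¹)
              = Real.exp ((k : ℝ)⁻¹ * 2⁻¹ * ∑ j, Real.log (z j ^ 2)) := by
          intro z hz
          have hlogj : ∀ j, Real.log (z j ^ 2) = 2 * Real.log |z j| := by
            intro j
            rw [show z j ^ 2 = |z j| ^ 2 from (sq_abs _).symm, Real.log_pow]
            push_cast
            ring
          rw [show (k : ℝ)⁻¹ * 2⁻¹ * ∑ j, Real.log (z j ^ 2)
              = ∑ j, Real.log |z j| * (k : ℝ)⁻¹ by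
            rw [Finset.mul_sum]
            apply Finset.sum_congr rfl
            intro j _
            rw [hlogj j]
            ring]
          rw [Real.exp_sum]
          apply Finset.prod_congr rfl
          intro j _
          exact Real.rpow_def_of_pos (abs_pos.2 (hz j)) _
        rw [hexp x hx0, hexp y hy0]
        apply Real.exp_le_exp.2
        have hcoef : (0 : ℝ) ≤ (k : ℝ)⁻¹ * 2⁻¹ := by positivity
        exact mul_le_mul_of_nonneg_left key hcoef
    -- real nonzero p
    have hq2 : p.toReal ≤ 2 := by
      have := EReal.toReal_le_toReal hp hpb h2t
      rw [show (2 : EReal) = ((2 : ℝ) : EReal) by norm_cast, EReal.toReal_coe] at this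
      exact this
    have hq0 : p.toReal ≠ 0 := by
      intro h0
      apply hp0
      rw [← EReal.coe_toReal hpt hpb, h0]
      norm_cast
    unfold pMean
    rw [if_neg hpt, if_neg hpt, if_neg hpb, if_neg hpb, if_neg hp0, if_neg hp0]
    rcases lt_or_gt_of_ne hq0 with hqneg | hqpos
    · by_cases hx0 : ∃ j, x j = 0
      · rw [if_pos ⟨hqneg, hx0⟩]
        split_ifs with h'
        · exact le_refl 0
        · positivity
      · push_neg at hx0
        have hy0 : ∀ j, y j ≠ 0 := hzero x y hmaj hx0
        rw [if_neg (fun h => hx0 h.2.choose h.2.choose_spec),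
          if_neg (fun h => hy0 h.2.choose h.2.choose_spec)]
        have hsum : ∑ j, |y j| ^ p.toReal ≤ ∑ j, |x j| ^ p.toReal := by
          have := PMAux.sum_sq_rpow_ge_neg hmaj (r := p.toReal / 2) (by linarith) hx0 hy0
          simpa only [← PMAux.abs_rpow_eq] using this
        have hypos : 0 < (k : ℝ)⁻¹ * ∑ j, |y j| ^ p.toReal := by
          apply mul_pos (inv_pos.2 (by exact_mod_cast (by omega : 0 < k)))
          exact Finset.sum_pos
            (fun j _ => Real.rpow_pos_of_pos (abs_pos.2 (hy0 j)) _) Finset.univ_nonempty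
        exact Real.rpow_le_rpow_of_nonpos hypos
          (mul_le_mul_of_nonneg_left hsum (by positivity)) (inv_nonpos.2 hqneg.le)
    · rw [if_neg (fun h => absurd h.1 (by linarith)),
        if_neg (fun h => absurd h.1 (by linarith))]
      have hsum : ∑ j, |x j| ^ p.toReal ≤ ∑ j, |y j| ^ p.toReal := by
        have := PMAux.sum_sq_rpow_le hmaj (r := p.toReal / 2) (by linarith) (by linarith)
        simpa only [← PMAux.abs_rpow_eq] using this
      exact Real.rpow_le_rpow (by positivity)
        (mul_le_mul_of_nonneg_left hsum (by positivity)) (inv_nonneg.2 hqpos.le)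
  · -- convex part
    intro p hp x y hmaj
    show pMean p y ≤ pMean p x
    by_cases hpt : p = ⊤
    · subst hpt
      unfold pMean
      rw [if_pos rfl, if_pos rfl]
      refine ciSup_le fun j => ?_
      obtain ⟨t, htc, hts⟩ := hmaj.2 {j}
      rw [Finset.card_singleton] at htc
      obtain ⟨i, rfl⟩ := Finset.card_eq_one.1 htc
      rw [Finset.sum_singleton, Finset.sum_singleton] at hts
      exact le_trans (PMAux.abs_le_abs_of_sq hts)
        (le_ciSup (f := fun j => |x j|) (Set.Finite.bddAbove (Set.finite_range _)) i)
    · have hpb : p ≠ ⊥ := by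
        rintro rfl
        exact h2b (le_bot_iff.1 hp)
      have hq2 : 2 ≤ p.toReal := by
        have := EReal.toReal_le_toReal hp h2b hpt
        rw [show (2 : EReal) = ((2 : ℝ) : EReal) by norm_cast, EReal.toReal_coe] at this
        exact this
      have hp0 : p ≠ 0 := by
        rintro rfl
        rw [show (0 : EReal) = ((0 : ℝ) : EReal) by norm_cast,
          show (2 : EReal) = ((2 : ℝ) : EReal) by norm_cast] at hp
        have : (2 : ℝ) ≤ 0 := by exact_mod_cast hp
        linarith
      unfold pMean
      rw [if_neg hpt, if_neg hpt, if_neg hpb, if_neg hpb, if_neg hp0, if_neg hp0,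
        if_neg (fun h => absurd h.1 (by linarith)),
        if_neg (fun h => absurd h.1 (by linarith))]
      have hsum : ∑ j, |y j| ^ p.toReal ≤ ∑ j, |x j| ^ p.toReal := by
        have := PMAux.sum_sq_rpow_ge hmaj (r := p.toReal / 2) (by linarith)
        simpa only [← PMAux.abs_rpow_eq] using this
      exact Real.rpow_le_rpow (by positivity)
        (mul_le_mul_of_nonneg_left hsum (by positivity)) (inv_nonneg.2 (by linarith))
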